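/- Let r ≥ 1 be an integer, and let u, v, w ∈ ℤ² be distinct with Δ = |v−w| ≤ 2r. Set λ = √(r² − Δ²/4), a = ⟨u−v, u−w⟩ (dot product) and b = ⟨u−v, (v−w)^⊥⟩ where (v−w)^⊥ is the rotation of v−w by 90 degrees. Then the distance from u to the circle of radius r with center (v+w)/2 − λ(v−w)^⊥/Δ equals |a + 2λb/Δ| / (√(a + 2λb/Δ + r²) + r). -/

import Mathlib

noncomputable def toPlane (p : ℤ × ℤ) : EuclideanSpace ℝ (Fin 2) :=
  !₂[(p.1 : ℝ), (p.2 : ℝ)]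

/-- Rotation of a planar vector by 90 degrees. -/
noncomputable def perp (p : EuclideanSpace ℝ (Fin 2)) : EuclideanSpace ℝ (Fin 2) :=
  !₂[-(p 1), p 0]

lemma toPlane_inj {p q : ℤ × ℤ} (h : toPlane p = toPlane q) : p = q := by
  have h0 := congrArg (fun q => q 0) h
  have h1 := congrArg (fun q => q 1) h
  simp [toPlane] at h0 h1
  exact Prod.ext (by exact_mod_cast h0) (by exact_mod_cast h1)

/-- Explicit formula for the distance from an integer point `u` to a radius-`r`
circle through integer points `v` and `w`. -/
theorem stmt_1 (r : ℤ) (hr : 1 ≤ r) (u v w : ℤ × ℤ)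
    (huv : u ≠ v) (huw : u ≠ w) (hvw : v ≠ w)
    (Δ lam a b : ℝ)
    (hΔ : Δ = dist (toPlane v) (toPlane w))
    (hΔ2r : Δ ≤ 2 * r)
    (hlam : lam = Real.sqrt ((r : ℝ) ^ 2 - Δ ^ 2 / 4))
    (ha : a = inner ℝ (toPlane u - toPlane v) (toPlane u - toPlane w))
    (hb : b = inner ℝ (toPlane u - toPlane v) (perp (toPlane v - toPlane w))) :
    |dist (toPlane u)
        ((1 / 2 : ℝ) • (toPlane v + toPlane w) - (lam / Δ) • perp (toPlane v - toPlane w)) - r|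
      = |a + 2 * lam * b / Δ| / (Real.sqrt (a + 2 * lam * b / Δ + (r : ℝ) ^ 2) + r) := by
  have hr1 : (1 : ℝ) ≤ (r : ℝ) := by exact_mod_cast hr
  have hΔpos : 0 < Δ := by
    rw [hΔ]
    exact dist_pos.mpr (fun h => hvw (toPlane_inj h))
  have hΔne : Δ ≠ 0 := ne_of_gt hΔpos
  have hsub : (0:ℝ) ≤ (r : ℝ) ^ 2 - Δ ^ 2 / 4 := by nlinarith [hΔpos.le]
  have hlam_nonneg : 0 ≤ lam := hlam ▸ Real.sqrt_nonneg _
  have hlam_sq : lam ^ 2 = (r : ℝ) ^ 2 - Δ ^ 2 / 4 := by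
    rw [hlam, Real.sq_sqrt hsub]
  have hΔsq : Δ ^ 2 = (dist (toPlane v) (toPlane w)) ^ 2 := by rw [hΔ]
  set x := toPlane u
  set y := toPlane v
  set z := toPlane w
  set O := (1 / 2 : ℝ) • (y + z) - (lam / Δ) • perp (y - z) with hO
  set D := a + 2 * lam * b / Δ + (r : ℝ) ^ 2 with hDdef
  have hdist_sq : (dist x O) ^ 2 = D := by
    have hd : (dist x O) ^ 2 = (x 0 - O 0)^2 + (x 1 - O 1)^2 := by
      rw [EuclideanSpace.dist_eq, Real.sq_sqrt (by positivity)]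
      simp [Fin.sum_univ_two, Real.dist_eq, sq_abs]
    have hΔ2 : Δ ^ 2 = (y 0 - z 0)^2 + (y 1 - z 1)^2 := by
      rw [hΔsq, EuclideanSpace.dist_eq, Real.sq_sqrt (by positivity)]
      simp [Fin.sum_univ_two, Real.dist_eq, sq_abs]
    have hO0 : O 0 = (1/2) * (y 0 + z 0) - (lam / Δ) * (-(y 1 - z 1)) := by
      simp [hO, perp]
      ring
    have hO1 : O 1 = (1/2) * (y 1 + z 1) - (lam / Δ) * (y 0 - z 0) := by
      simp [hO, perp]
      ring
    have ha' : a = (x 0 - y 0) * (x 0 - z 0) + (x 1 - y 1) * (x 1 - z 1) := by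
      rw [ha]
      simp [PiLp.inner_apply, Fin.sum_univ_two]
      ring
    have hb' : b = (x 0 - y 0) * (-(y 1 - z 1)) + (x 1 - y 1) * (y 0 - z 0) := by
      rw [hb]
      simp [PiLp.inner_apply, Fin.sum_univ_two, perp]
      ring
    rw [hd, hO0, hO1, hDdef, ha', hb']
    field_simp
    linear_combination (-4*(r:ℝ)^2) * hΔ2 + (4 * ((y 0 - z 0)^2+(y 1 - z 1)^2)) * hlam_sq
  have hD0 : 0 ≤ D := hdist_sq ▸ sq_nonneg _
  have hdist : dist x O = Real.sqrt D := by
    rw [← hdist_sq, Real.sqrt_sq dist_nonneg]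
  rw [hdist]
  have hs : Real.sqrt D ^ 2 = D := Real.sq_sqrt hD0
  have hpos : 0 < Real.sqrt D + (r : ℝ) := by positivity
  rw [eq_div_iff hpos.ne']
  have : |Real.sqrt D - r| * (Real.sqrt D + r) = |(Real.sqrt D - r) * (Real.sqrt D + r)| := by
    rw [abs_mul, abs_of_nonneg hpos.le]
  rw [this]
  congr 1
  have : (Real.sqrt D - r) * (Real.sqrt D + r) = D - (r:ℝ)^2 := by
    linear_combination hs
  rw [this, hDdef]
  ring
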